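/- Let (M_p)_{p∈ℕ} be a sequence of positive reals with M_0 = 1, and define its associated function M(t) = sup_{p∈ℕ} log(t^p / M_p) for t > 0, and the log-convex regularization M_p^c = sup_{t>0} t^p e^{−M(t)}. Then M_p^c ≤ M_p for every p, and (M_p)_p satisfies the log-convexity condition M_p² ≤ M_{p−1} M_{p+1} for all p ≥ 1 if and only if M_p = M_p^c for all p. -/
import Mathlib

open scoped ENNReal

noncomputable def assocFn (M : ℕ → ℝ) (t : ℝ) : EReal :=
  ⨆ p : ℕ, ((Real.log (t ^ p / M p) : ℝ) : EReal)

noncomputable def logConvexReg (M : ℕ → ℝ) (p : ℕ) : ℝ≥0∞ :=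
  ⨆ t : {t : ℝ // 0 < t}, ENNReal.ofReal ((t : ℝ) ^ p) * EReal.exp (-(assocFn M t))

section Aux

variable {M : ℕ → ℝ}

/-- Pointwise bound: each term in the sup defining `M_p^c` is at most `M_p`. -/
lemma term_le (hpos : ∀ p, 0 < M p) (p : ℕ) (t : ℝ) (ht : 0 < t) :
    ENNReal.ofReal (t ^ p) * EReal.exp (-(assocFn M t)) ≤ ENNReal.ofReal (M p) := by
  have hMp := hpos p
  have hdiv : 0 < t ^ p / M p := by positivity
  have hb : ((Real.log (t ^ p / M p) : ℝ) : EReal) ≤ assocFn M t := by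
    rw [assocFn]
    exact le_iSup (fun q => ((Real.log (t ^ q / M q) : ℝ) : EReal)) p
  have h2 : EReal.exp (-(assocFn M t)) ≤ EReal.exp (-((Real.log (t ^ p / M p) : ℝ) : EReal)) :=
    EReal.exp_monotone (EReal.neg_le_neg_iff.mpr hb)
  have h3 : EReal.exp (-((Real.log (t ^ p / M p) : ℝ) : EReal))
      = ENNReal.ofReal (M p / t ^ p) := by
    rw [← EReal.coe_neg, EReal.exp_coe, Real.exp_neg, Real.exp_log hdiv]
    congr 1
    field_simp
  calc ENNReal.ofReal (t ^ p) * EReal.exp (-(assocFn M t))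
      ≤ ENNReal.ofReal (t ^ p) * ENNReal.ofReal (M p / t ^ p) :=
        mul_le_mul_right (h3 ▸ h2) _
    _ = ENNReal.ofReal (t ^ p * (M p / t ^ p)) := by
        rw [ENNReal.ofReal_mul (by positivity)]
    _ = ENNReal.ofReal (M p) := by
        congr 1; field_simp

/-- Monotonicity of the quotients `M_{a+1}/M_a` under log-convexity. -/
lemma chain (hpos : ∀ p, 0 < M p)
    (hlc : ∀ p : ℕ, 1 ≤ p → (M p) ^ 2 ≤ M (p - 1) * M (p + 1)) :
    ∀ a b : ℕ, a ≤ b → M (a + 1) * M b ≤ M a * M (b + 1) := by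
  intro a b hab
  induction b, hab using Nat.le_induction with
  | base => exact le_of_eq (mul_comm _ _)
  | succ b hab IH =>
    have h1 : (M (b + 1)) ^ 2 ≤ M b * M (b + 2) := by
      have := hlc (b + 1) (by omega)
      simpa using this
    have hb0 := hpos b
    have hb1 := hpos (b+1)
    have ha0 := hpos a
    have h2 : M (b+1+1) = M (b+2) := by norm_num
    have key : (M (a+1) * M (b+1)) * (M b * M (b+1))
        ≤ (M a * M (b+1+1)) * (M b * M (b+1)) := by
      have hprod : (M (a+1) * M b) * (M (b+1) ^ 2) ≤ (M a * M (b+1)) * (M b * M (b+2)) :=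
        mul_le_mul IH h1 (by positivity) (by positivity)
      calc (M (a+1) * M (b+1)) * (M b * M (b+1)) = (M (a+1) * M b) * (M (b+1) ^ 2) := by ring
        _ ≤ (M a * M (b+1)) * (M b * M (b+2)) := hprod
        _ = (M a * M (b+1+1)) * (M b * M (b+1)) := by rw [h2]; ring
    exact le_of_mul_le_mul_right key (by positivity)

/-- Key polynomial inequality: with `A = M (p+1)`, `B = M p`,
`A^q * B^(p+1) ≤ A^p * B^q * M q` for all `q`. -/
lemma keyIneq (hpos : ∀ p, 0 < M p)
    (hlc : ∀ p : ℕ, 1 ≤ p → (M p) ^ 2 ≤ M (p - 1) * M (p + 1)) (p q : ℕ) :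
    M (p+1) ^ q * M p ^ (p+1) ≤ M (p+1) ^ p * M p ^ q * M q := by
  set A := M (p + 1) with hA
  set B := M p with hB
  have hApos : 0 < A := hpos _
  have hBpos : 0 < B := hpos _
  rcases le_or_gt p q with hpq | hqp
  · -- upward induction
    induction q, hpq using Nat.le_induction with
    | base => exact le_of_eq (by ring)
    | succ q hq IH =>
      have hch : A * M q ≤ B * M (q + 1) := by
        have := chain hpos hlc p q hq
        calc A * M q = M (p+1) * M q := rfl
          _ ≤ M p * M (q+1) := this
          _ = B * M (q+1) := rfl
      calc A ^ (q+1) * B ^ (p+1) = A * (A ^ q * B ^ (p+1)) := by ring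
        _ ≤ A * (A ^ p * B ^ q * M q) := by
            exact mul_le_mul_of_nonneg_left IH hApos.le
        _ = (A ^ p * B ^ q) * (A * M q) := by ring
        _ ≤ (A ^ p * B ^ q) * (B * M (q+1)) := by
            exact mul_le_mul_of_nonneg_left hch (by positivity)
        _ = A ^ p * B ^ (q+1) * M (q+1) := by ring
  · -- downward: q < p
    obtain ⟨d, hd⟩ : ∃ d, q + d = p := ⟨p - q, by omega⟩
    clear hqp
    induction d generalizing q with
    | zero => simp only [Nat.add_zero] at hd; subst hd; exact le_of_eq (by ring)
    | succ d IH =>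
      have hd' : (q + 1) + d = p := by omega
      have IH' := IH (q+1) hd'
      have hqp' : q ≤ p := by omega
      have hch : M (q+1) * B ≤ M q * A := by
        have := chain hpos hlc q p hqp'
        calc M (q+1) * B = M (q+1) * M p := rfl
          _ ≤ M q * M (p+1) := this
          _ = M q * A := rfl
      have key : A * (A ^ q * B ^ (p+1)) ≤ A * (A ^ p * B ^ q * M q) := by
        calc A * (A ^ q * B ^ (p+1)) = A ^ (q+1) * B ^ (p+1) := by ring
          _ ≤ A ^ p * B ^ (q+1) * M (q+1) := IH'
          _ = (A ^ p * B ^ q) * (M (q+1) * B) := by ring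
          _ ≤ (A ^ p * B ^ q) * (M q * A) := by
              exact mul_le_mul_of_nonneg_left hch (by positivity)
          _ = A * (A ^ p * B ^ q * M q) := by ring
      exact le_of_mul_le_mul_left key hApos

/-- At `t = M(p+1)/M p`, the sup in the associated function is attained at `p`. -/
lemma assocFn_attain (hpos : ∀ p, 0 < M p)
    (hlc : ∀ p : ℕ, 1 ≤ p → (M p) ^ 2 ≤ M (p - 1) * M (p + 1)) (p : ℕ) :
    assocFn M (M (p+1) / M p) =
      ((Real.log ((M (p+1) / M p) ^ p / M p) : ℝ) : EReal) := by
  have h0 := hpos p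
  have h1 := hpos (p+1)
  set t := M (p+1) / M p with ht
  have htpos : 0 < t := by positivity
  rw [assocFn]
  refine le_antisymm (iSup_le fun q => ?_)
    (le_iSup (fun q => ((Real.log (t ^ q / M q) : ℝ) : EReal)) p)
  rw [EReal.coe_le_coe_iff]
  have hq0 := hpos q
  have hq : t ^ q / M q ≤ t ^ p / M p := by
    rw [div_le_div_iff₀ (hpos q) (hpos p)]
    have := keyIneq hpos hlc p q
    have hconv : t ^ q * M p ≤ t ^ p * M q := by
      rw [ht, div_pow, div_pow, div_mul_eq_mul_div, div_mul_eq_mul_div,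
        div_le_div_iff₀ (by positivity) (by positivity)]
      calc M (p+1) ^ q * M p * M p ^ p = M (p+1) ^ q * M p ^ (p+1) := by ring
        _ ≤ M (p+1) ^ p * M p ^ q * M q := this
        _ = M (p+1) ^ p * M q * M p ^ q := by ring
    exact hconv
  exact Real.log_le_log (by positivity) hq

end Aux

theorem logConvexReg_le_and_eq_iff (M : ℕ → ℝ)
    (hpos : ∀ p, 0 < M p) (hM0 : M 0 = 1) :
    (∀ p, logConvexReg M p ≤ ENNReal.ofReal (M p)) ∧
      ((∀ p : ℕ, 1 ≤ p → (M p) ^ 2 ≤ M (p - 1) * M (p + 1)) ↔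
        (∀ p, logConvexReg M p = ENNReal.ofReal (M p))) := by
  have hle : ∀ p, logConvexReg M p ≤ ENNReal.ofReal (M p) := by
    intro p
    exact iSup_le fun t => term_le hpos p t t.2
  refine ⟨hle, ⟨fun hlc p => ?_, fun heq p hp1 => ?_⟩⟩
  · -- forward: equality
    refine le_antisymm (hle p) ?_
    have h0 := hpos p
    have h1 := hpos (p+1)
    set t : ℝ := M (p+1) / M p with ht
    have htpos : 0 < t := by positivity
    have hattain := assocFn_attain hpos hlc p
    have hterm : ENNReal.ofReal (t ^ p) * EReal.exp (-(assocFn M t))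
        = ENNReal.ofReal (M p) := by
      rw [hattain, ← EReal.coe_neg, EReal.exp_coe, Real.exp_neg,
        Real.exp_log (by positivity : (0:ℝ) < t ^ p / M p),
        ← ENNReal.ofReal_mul (by positivity)]
      congr 1
      field_simp
    calc ENNReal.ofReal (M p) = ENNReal.ofReal (t ^ p) * EReal.exp (-(assocFn M t)) :=
          hterm.symm
      _ ≤ logConvexReg M p := le_iSup
          (fun s : {s : ℝ // 0 < s} =>
            ENNReal.ofReal ((s:ℝ) ^ p) * EReal.exp (-(assocFn M (s:ℝ)))) ⟨t, htpos⟩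
  · -- backward: log-convexity
    obtain ⟨k, rfl⟩ : ∃ k, p = k + 1 := ⟨p - 1, by omega⟩
    simp only [Nat.add_sub_cancel]
    have hmain : ∀ (s u : {t : ℝ // 0 < t}), (s:ℝ) ≤ u →
        (ENNReal.ofReal ((s:ℝ) ^ (k+1)) * EReal.exp (-(assocFn M s))) *
        (ENNReal.ofReal ((u:ℝ) ^ (k+1)) * EReal.exp (-(assocFn M u))) ≤
        logConvexReg M k * logConvexReg M (k+2) := by
      intro s u hsu
      have hs := s.2
      have hu := u.2
      have hreal : (s:ℝ) ^ (k+1) * (u:ℝ) ^ (k+1) ≤ (s:ℝ) ^ k * (u:ℝ) ^ (k+2) := by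
        calc (s:ℝ) ^ (k+1) * (u:ℝ) ^ (k+1) = ((s:ℝ) ^ k * (u:ℝ) ^ (k+1)) * s := by ring
          _ ≤ ((s:ℝ) ^ k * (u:ℝ) ^ (k+1)) * u := by
              exact mul_le_mul_of_nonneg_left hsu (by positivity)
          _ = (s:ℝ) ^ k * (u:ℝ) ^ (k+2) := by ring
      have h1 : (ENNReal.ofReal ((s:ℝ) ^ (k+1)) * EReal.exp (-(assocFn M s))) *
          (ENNReal.ofReal ((u:ℝ) ^ (k+1)) * EReal.exp (-(assocFn M u))) ≤
          (ENNReal.ofReal ((s:ℝ) ^ k) * EReal.exp (-(assocFn M s))) *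
          (ENNReal.ofReal ((u:ℝ) ^ (k+2)) * EReal.exp (-(assocFn M u))) := by
        rw [mul_mul_mul_comm, mul_mul_mul_comm (ENNReal.ofReal ((s:ℝ) ^ k))]
        refine mul_le_mul_left ?_ _
        rw [← ENNReal.ofReal_mul (by positivity), ← ENNReal.ofReal_mul (by positivity)]
        exact ENNReal.ofReal_le_ofReal hreal
      refine h1.trans (mul_le_mul' ?_ ?_)
      · exact le_iSup (fun t : {t : ℝ // 0 < t} =>
          ENNReal.ofReal ((t:ℝ) ^ k) * EReal.exp (-(assocFn M (t:ℝ)))) s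
      · exact le_iSup (fun t : {t : ℝ // 0 < t} =>
          ENNReal.ofReal ((t:ℝ) ^ (k+2)) * EReal.exp (-(assocFn M (t:ℝ)))) u
    have hkey : ENNReal.ofReal (M (k+1)) * ENNReal.ofReal (M (k+1)) ≤
        logConvexReg M k * logConvexReg M (k+2) := by
      rw [← heq (k+1)]
      rw [logConvexReg, ENNReal.iSup_mul]
      refine iSup_le fun s => ?_
      rw [ENNReal.mul_iSup]
      refine iSup_le fun u => ?_
      rcases le_total (s:ℝ) (u:ℝ) with h | h
      · exact hmain s u h
      · rw [mul_comm]
        exact hmain u s h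
    rw [heq k, heq (k+2)] at hkey
    rw [← ENNReal.ofReal_mul (hpos _).le, ← ENNReal.ofReal_mul (hpos _).le] at hkey
    have hk0 := hpos k
    have hk2 := hpos (k+2)
    have := (ENNReal.ofReal_le_ofReal_iff (by positivity)).mp hkey
    calc M (k+1) ^ 2 = M (k+1) * M (k+1) := sq (M (k+1)) ▸ by ring
      _ ≤ M k * M (k+2) := this
      _ = M k * M (k+1+1) := rfl
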